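/- If M is a symmetric invertible real matrix whose inverse M⁻¹ is a complete M-matrix (positive diagonal, strictly negative off-diagonal entries) and M is positive definite, then all entries of M are strictly positive. -/

import Mathlib

open Matrix

/-- A symmetric positive definite matrix whose inverse is a complete M-matrix
(positive diagonal, strictly negative off-diagonal) has all entries strictly positive. -/
theorem inverse_M_matrix_implies_positive_entries
    {n : Type*} [Fintype n] [DecidableEq n]
    (M : Matrix n n ℝ) (hsym : M.IsSymm) (hpd : M.PosDef)
    (hdiag : ∀ i, 0 < M⁻¹ i i) (hoff : ∀ i j, i ≠ j → M⁻¹ i j < 0) :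
    ∀ i j, 0 < M i j := by
  have hApd : (M⁻¹).PosDef := hpd.inv
  have hAq : ∀ y : n → ℝ, y ≠ 0 → 0 < y ⬝ᵥ (M⁻¹ *ᵥ y) := by
    intro y hy
    simpa using hApd.dotProduct_mulVec_pos hy
  intro i j
  set x : n → ℝ := fun k => M k j with hxdef
  have hAx : M⁻¹ *ᵥ x = Pi.single j 1 := by
    have h1 : M⁻¹ * M = 1 := Matrix.nonsing_inv_mul M (isUnit_iff_ne_zero.mpr hpd.det_pos.ne')
    funext k
    have h2 := congrFun (congrFun h1 k) j
    simpa [Matrix.mul_apply, Matrix.mulVec, dotProduct, Matrix.one_apply,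
      Pi.single_apply, eq_comm] using h2
  set v : n → ℝ := fun k => max (-x k) 0 with hvdef
  set u : n → ℝ := fun k => max (x k) 0 with hudef
  have huv : ∀ k, u k - v k = x k := by
    intro k
    rcases le_total (x k) 0 with h | h
    · simp [hudef, hvdef, max_eq_right h, max_eq_left (neg_nonneg.mpr h)]
    · simp [hudef, hvdef, max_eq_left h, max_eq_right (neg_nonpos.mpr h)]
  have huv0 : ∀ k, u k * v k = 0 := by
    intro k
    rcases le_total (x k) 0 with h | h
    · simp [hudef, max_eq_right h]
    · simp [hvdef, max_eq_right (neg_nonpos.mpr h)]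
  have hu : ∀ k, 0 ≤ u k := fun k => le_max_right _ _
  have hv : ∀ k, 0 ≤ v k := fun k => le_max_right _ _
  have hvAu : v ⬝ᵥ (M⁻¹ *ᵥ u) ≤ 0 := by
    rw [dotProduct]
    apply Finset.sum_nonpos
    intro k _
    rw [Matrix.mulVec, dotProduct, Finset.mul_sum]
    apply Finset.sum_nonpos
    intro l _
    rcases eq_or_ne k l with rfl | hkl
    · have e : v k * (M⁻¹ k k * u k) = M⁻¹ k k * (u k * v k) := by ring
      rw [e, huv0 k, mul_zero]
    · nlinarith [hoff k l hkl, mul_nonneg (hv k) (hu l)]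
  have hvAx : v ⬝ᵥ (M⁻¹ *ᵥ x) = v j := by
    rw [hAx, dotProduct_single, mul_one]
  have hxuv : x = u - v := by funext k; exact (huv k).symm
  have hvAv : v ⬝ᵥ (M⁻¹ *ᵥ v) ≤ 0 := by
    have h3 : v ⬝ᵥ (M⁻¹ *ᵥ x) = v ⬝ᵥ (M⁻¹ *ᵥ u) - v ⬝ᵥ (M⁻¹ *ᵥ v) := by
      rw [hxuv, Matrix.mulVec_sub, dotProduct_sub]
    rw [hvAx] at h3
    have hvj := hv j
    linarith
  have hv0 : v = 0 := by
    by_contra h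
    exact absurd (hAq v h) (not_lt.mpr hvAv)
  have hxnn : ∀ k, 0 ≤ x k := by
    intro k
    have h2 : v k = 0 := congrFun hv0 k
    by_contra h
    push_neg at h
    rw [hvdef] at h2
    simp only at h2
    rw [max_eq_left (by linarith)] at h2
    linarith
  have hxj : 0 < x j := by
    have hxne : x ≠ 0 := by
      intro h
      rw [h] at hAx
      have h4 := congrFun hAx j
      simp [Matrix.mulVec_zero] at h4
    have h5 := hAq x hxne
    rwa [hAx, dotProduct_single, mul_one] at h5
  rcases eq_or_ne i j with rfl | hij
  · exact hxj
  · by_contra h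
    push_neg at h
    have hxi : x i = 0 := le_antisymm h (hxnn i)
    have hAxi : (M⁻¹ *ᵥ x) i = 0 := by
      rw [hAx]; simp [Pi.single_apply, hij]
    rw [Matrix.mulVec, dotProduct] at hAxi
    have hlt : ∑ k, M⁻¹ i k * x k < ∑ _k : n, (0 : ℝ) := by
      apply Finset.sum_lt_sum
      · intro k _
        rcases eq_or_ne i k with rfl | hik
        · rw [hxi]; simp
        · nlinarith [hoff i k hik, hxnn k]
      · exact ⟨j, Finset.mem_univ j, by nlinarith [hoff i j hij, hxj]⟩
    rw [hAxi] at hlt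
    simp at hlt
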